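/- Fix 0 < ε < 1/4, 0 < δ ≤ 1/2, and 0 < p_c ≤ 1/(8ε), and fix a sample size m. There exists a probability distribution D over [0,1] × {0,1} such that for every IDT algorithm ĉ : ([0,1] × {0,1})^m → (0,1) there exists a loss parameter c ∈ (0,1) with the following properties: P(q(X) ∈ (c, c + ε]) ≥ p_c·ε and P(q(X) ∈ [c − ε, c)) ≥ p_c·ε; and if m < log(1/(2δ))/(8·p_c·ε), then P(|ĉ(S) − c| ≥ ε) > δ, where S is a sample of size m from the Bayes optimal rule h(x) = 1{q(x) ≥ c}. -/

import Mathlib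

set_option maxHeartbeats 1000000


open MeasureTheory ProbabilityTheory Set

noncomputable section

/-- The loss with false-positive cost `c` and false-negative cost `1 - c`
(`true` encodes the decision/label `1`, `false` encodes `0`). -/
def idtLoss (c : ℝ) (yhat y : Bool) : ℝ :=
  if yhat = y then 0 else if yhat = true then c else 1 - c

/-- The risk of decision rule `h` on distribution `D` with loss parameter `c`. -/
def risk {X : Type*} [MeasurableSpace X] (D : Measure (X × Bool)) (c : ℝ) (h : X → Bool) : ℝ :=
  ∫ p, idtLoss c (h p.1) p.2 ∂D

/-- `q` is a version of the posterior probability `x ↦ P(Y = 1 ∣ X = x)` for `D`. -/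
def IsPosterior {X : Type*} [MeasurableSpace X] (D : Measure (X × Bool)) (q : X → ℝ) : Prop :=
  Measurable q ∧ ∀ A : Set X, MeasurableSet A →
    ∫ x in A, q x ∂(D.map Prod.fst) = (D (A ×ˢ ({true} : Set Bool))).toReal

namespace Stmt9Aux

open scoped ENNReal

variable {X : Type*} [MeasurableSpace X] [MeasurableSingletonClass X]

/-- point mass `w` at `x`, with probability `t` of label `true`. -/
def atomM (w t : ℝ) (x : X) : Measure (X × Bool) :=
  ENNReal.ofReal (w * t) • Measure.dirac (x, true)
    + ENNReal.ofReal (w * (1 - t)) • Measure.dirac (x, false)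

omit [MeasurableSingletonClass X] in
lemma atomM_map_fst (w t : ℝ) (hw : 0 ≤ w) (ht0 : 0 ≤ t) (ht1 : t ≤ 1) (x : X) :
    (atomM w t x).map Prod.fst = ENNReal.ofReal w • Measure.dirac x := by
  rw [atomM, Measure.map_add _ _ measurable_fst, Measure.map_smul, Measure.map_smul,
    Measure.map_dirac' measurable_fst, Measure.map_dirac' measurable_fst]
  have h : w * t + w * (1 - t) = w := by ring
  rw [← add_smul, ← ENNReal.ofReal_add (mul_nonneg hw ht0) (mul_nonneg hw (by linarith)), h]

lemma atomM_apply_true (w t : ℝ) (x : X) (A : Set X) [Decidable (x ∈ A)] :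
    atomM w t x (A ×ˢ ({true} : Set Bool)) = if x ∈ A then ENNReal.ofReal (w * t) else 0 := by
  rw [atomM, Measure.add_apply, Measure.smul_apply, Measure.smul_apply,
    Measure.dirac_apply, Measure.dirac_apply]
  split_ifs with hx
  · rw [Set.indicator_of_mem (by simp [hx]), Set.indicator_of_notMem (by simp)]
    simp
  · rw [Set.indicator_of_notMem (by simp [hx]), Set.indicator_of_notMem (by simp)]
    simp

omit [MeasurableSingletonClass X] in
lemma atomM_univ (w t : ℝ) (hw : 0 ≤ w) (ht0 : 0 ≤ t) (ht1 : t ≤ 1) (x : X) :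
    atomM w t x Set.univ = ENNReal.ofReal w := by
  rw [atomM, Measure.add_apply, Measure.smul_apply, Measure.smul_apply]
  simp only [measure_univ, smul_eq_mul, mul_one]
  rw [← ENNReal.ofReal_add (mul_nonneg hw ht0) (mul_nonneg hw (by linarith))]
  ring_nf

lemma setIntegral_smul_dirac (f : X → ℝ) (w : ℝ) (hw : 0 ≤ w) (x : X) (A : Set X)
    [Decidable (x ∈ A)] :
    ∫ z in A, f z ∂(ENNReal.ofReal w • Measure.dirac x)
      = if x ∈ A then w * f x else 0 := by
  rw [Measure.restrict_smul, integral_smul_measure, setIntegral_dirac,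
    ENNReal.toReal_ofReal hw, smul_eq_mul, mul_ite, mul_zero]

lemma integrable_smul_dirac_restrict (f : X → ℝ) (w : ℝ) (x : X) (A : Set X) :
    Integrable f ((ENNReal.ofReal w • Measure.dirac x).restrict A) := by
  have h1 : Integrable f (Measure.dirac x) :=
    (integrable_const (f x)).congr (MeasureTheory.ae_eq_dirac f).symm
  exact (h1.smul_measure ENNReal.ofReal_ne_top).restrict

lemma le5_2 {a b c d e g : ℝ≥0∞} (h : g ≤ b) : g ≤ a + b + c + d + e :=
  calc g ≤ b := h
    _ ≤ a + b := le_add_self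
    _ ≤ a + b + c := le_self_add
    _ ≤ a + b + c + d := le_self_add
    _ ≤ a + b + c + d + e := le_self_add

lemma le5_3 {a b c d e g : ℝ≥0∞} (h : g ≤ c) : g ≤ a + b + c + d + e :=
  calc g ≤ c := h
    _ ≤ a + b + c := le_add_self
    _ ≤ a + b + c + d := le_self_add
    _ ≤ a + b + c + d + e := le_self_add

lemma le5_4 {a b c d e g : ℝ≥0∞} (h : g ≤ d) : g ≤ a + b + c + d + e :=
  calc g ≤ d := h
    _ ≤ a + b + c + d := le_add_self
    _ ≤ a + b + c + d + e := le_self_add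

lemma le5_5 {a b c d e g : ℝ≥0∞} (h : g ≤ e) : g ≤ a + b + c + d + e := le_add_self.trans' h

lemma real_aux (p δ : ℝ) (m : ℕ) (hp : 0 < p) (hp8 : p ≤ 1/8) (hδ : 0 < δ)
    (hm : (m : ℝ) < Real.log (1 / (2 * δ)) / (8 * p)) : 2 * δ < (1 - 2 * p) ^ m := by
  set L := Real.log (1 / (2 * δ)) with hL
  have h8 : (m : ℝ) * (8 * p) < L := (lt_div_iff₀ (by positivity)).1 hm
  have hpos : (0:ℝ) < 1 - 2 * p := by linarith
  have hlog : -(4 * p) ≤ Real.log (1 - 2 * p) := by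
    rw [Real.le_log_iff_exp_le hpos]
    have h1 : 1 + 4 * p ≤ Real.exp (4 * p) := by
      have := Real.add_one_le_exp (4 * p); linarith
    have h2 : Real.exp (-(4 * p)) ≤ 1 / (1 + 4 * p) := by
      have := one_div_le_one_div_of_le (by positivity : (0:ℝ) < 1 + 4 * p) h1
      simpa [Real.exp_neg, one_div] using this
    have h3 : 1 / (1 + 4 * p) ≤ 1 - 2 * p := by
      rw [div_le_iff₀ (by positivity)]; nlinarith
    linarith
  have key : -L < (m : ℝ) * Real.log (1 - 2 * p) := by
    have h4 : (m : ℝ) * (-(4 * p)) ≤ (m : ℝ) * Real.log (1 - 2 * p) :=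
      mul_le_mul_of_nonneg_left hlog (Nat.cast_nonneg m)
    nlinarith [mul_nonneg (Nat.cast_nonneg m) hp.le]
  have hpow : (1 - 2 * p) ^ m = Real.exp ((m : ℝ) * Real.log (1 - 2 * p)) := by
    calc (1 - 2 * p) ^ m = Real.exp (Real.log (1 - 2 * p)) ^ m := by rw [Real.exp_log hpos]
      _ = Real.exp ((m : ℝ) * Real.log (1 - 2 * p)) := (Real.exp_nat_mul _ m).symm
  have h2δ : 2 * δ = Real.exp (-L) := by
    rw [hL, one_div, Real.log_inv, neg_neg, Real.exp_log (by positivity)]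
  rw [hpow, h2δ]
  exact Real.exp_lt_exp.mpr key

end Stmt9Aux

open Stmt9Aux

/-- minimax lower bound for an optimal decision maker. -/
theorem stmt_9 (ε δ p_c : ℝ) (hε : 0 < ε) (hε' : ε < 1 / 4)
    (hδ : 0 < δ) (hδ' : δ ≤ 1 / 2)
    (hpc : 0 < p_c) (hpc' : p_c ≤ 1 / (8 * ε)) (m : ℕ) :
    ∃ (D : Measure (↥(Set.Icc (0 : ℝ) 1) × Bool)) (_ : IsProbabilityMeasure D)
      (q : ↥(Set.Icc (0 : ℝ) 1) → ℝ),
      IsPosterior D q ∧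
      ∀ alg : (Fin m → ↥(Set.Icc (0 : ℝ) 1) × Bool) → ℝ,
        Measurable alg → (∀ s, alg s ∈ Set.Ioo (0 : ℝ) 1) →
        ∃ c ∈ Set.Ioo (0 : ℝ) 1,
          ENNReal.ofReal (p_c * ε) ≤
            D.map Prod.fst {x | q x ∈ Set.Ioc c (c + ε)} ∧
          ENNReal.ofReal (p_c * ε) ≤
            D.map Prod.fst {x | q x ∈ Set.Ico (c - ε) c} ∧
          ((m : ℝ) < Real.log (1 / (2 * δ)) / (8 * p_c * ε) →
            ENNReal.ofReal δ <
              (Measure.pi fun _ : Fin m => D.map Prod.fst)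
                {xs | ε ≤ |alg (fun i => (xs i, decide (c ≤ q (xs i)))) - c|}) := by
  classical
  have hp0 : 0 < p_c * ε := mul_pos hpc hε
  have hp8 : p_c * ε ≤ 1/8 := by
    have h2 : (1/(8*ε)) * ε = 1/8 := by field_simp
    nlinarith [mul_le_mul_of_nonneg_right hpc' hε.le]
  have hw0 : (0:ℝ) ≤ 1 - 4*(p_c*ε) := by linarith
  -- the five atoms
  have hm0 : (0:ℝ) ∈ Set.Icc (0:ℝ) 1 := by norm_num
  have hm1 : (1/4 - ε/2 : ℝ) ∈ Set.Icc (0:ℝ) 1 := ⟨by linarith, by linarith⟩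
  have hm2 : (1/4 + ε/2 : ℝ) ∈ Set.Icc (0:ℝ) 1 := ⟨by linarith, by linarith⟩
  have hm3 : (1/4 + 3*ε/2 : ℝ) ∈ Set.Icc (0:ℝ) 1 := ⟨by linarith, by linarith⟩
  have hm4 : (1/4 + 5*ε/2 : ℝ) ∈ Set.Icc (0:ℝ) 1 := ⟨by linarith, by linarith⟩
  set x0 : ↥(Set.Icc (0:ℝ) 1) := ⟨0, hm0⟩ with hx0def
  set x1 : ↥(Set.Icc (0:ℝ) 1) := ⟨1/4 - ε/2, hm1⟩ with hx1def
  set x2 : ↥(Set.Icc (0:ℝ) 1) := ⟨1/4 + ε/2, hm2⟩ with hx2def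
  set x3 : ↥(Set.Icc (0:ℝ) 1) := ⟨1/4 + 3*ε/2, hm3⟩ with hx3def
  set x4 : ↥(Set.Icc (0:ℝ) 1) := ⟨1/4 + 5*ε/2, hm4⟩ with hx4def
  have hv0 : (x0 : ℝ) = 0 := rfl
  have hv1 : (x1 : ℝ) = 1/4 - ε/2 := rfl
  have hv2 : (x2 : ℝ) = 1/4 + ε/2 := rfl
  have hv3 : (x3 : ℝ) = 1/4 + 3*ε/2 := rfl
  have hv4 : (x4 : ℝ) = 1/4 + 5*ε/2 := rfl
  set D : Measure (↥(Set.Icc (0:ℝ) 1) × Bool) :=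
    atomM (1 - 4*(p_c*ε)) 0 x0 + atomM (p_c*ε) (1/4 - ε/2) x1 + atomM (p_c*ε) (1/4 + ε/2) x2
      + atomM (p_c*ε) (1/4 + 3*ε/2) x3 + atomM (p_c*ε) (1/4 + 5*ε/2) x4 with hDdef
  -- the marginal
  have hμ : D.map Prod.fst
      = ENNReal.ofReal (1 - 4*(p_c*ε)) • Measure.dirac x0
        + ENNReal.ofReal (p_c*ε) • Measure.dirac x1
        + ENNReal.ofReal (p_c*ε) • Measure.dirac x2
        + ENNReal.ofReal (p_c*ε) • Measure.dirac x3
        + ENNReal.ofReal (p_c*ε) • Measure.dirac x4 := by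
    rw [hDdef, Measure.map_add _ _ measurable_fst, Measure.map_add _ _ measurable_fst,
      Measure.map_add _ _ measurable_fst, Measure.map_add _ _ measurable_fst,
      atomM_map_fst _ _ hw0 le_rfl zero_le_one,
      atomM_map_fst _ _ hp0.le (by linarith) (by linarith),
      atomM_map_fst _ _ hp0.le (by linarith) (by linarith),
      atomM_map_fst _ _ hp0.le (by linarith) (by linarith),
      atomM_map_fst _ _ hp0.le (by linarith) (by linarith)]
  have hDP : IsProbabilityMeasure D := by
    constructor
    rw [hDdef, Measure.add_apply, Measure.add_apply, Measure.add_apply, Measure.add_apply,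
      atomM_univ _ _ hw0 le_rfl zero_le_one,
      atomM_univ _ _ hp0.le (by linarith) (by linarith),
      atomM_univ _ _ hp0.le (by linarith) (by linarith),
      atomM_univ _ _ hp0.le (by linarith) (by linarith),
      atomM_univ _ _ hp0.le (by linarith) (by linarith),
      ← ENNReal.ofReal_add (by linarith) hp0.le,
      ← ENNReal.ofReal_add (by linarith) hp0.le,
      ← ENNReal.ofReal_add (by linarith) hp0.le,
      ← ENNReal.ofReal_add (by linarith) hp0.le]
    have : 1 - 4 * (p_c * ε) + p_c * ε + p_c * ε + p_c * ε + p_c * ε = 1 := by ring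
    rw [this, ENNReal.ofReal_one]
  refine ⟨D, hDP, fun x => (x : ℝ), ⟨measurable_subtype_coe, ?_⟩, ?_⟩
  · -- IsPosterior
    intro A hA
    have I0 := integrable_smul_dirac_restrict (fun x : ↥(Set.Icc (0:ℝ) 1) => (x:ℝ))
      (1 - 4*(p_c*ε)) x0 A
    have I1 := integrable_smul_dirac_restrict (fun x : ↥(Set.Icc (0:ℝ) 1) => (x:ℝ)) (p_c*ε) x1 A
    have I2 := integrable_smul_dirac_restrict (fun x : ↥(Set.Icc (0:ℝ) 1) => (x:ℝ)) (p_c*ε) x2 A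
    have I3 := integrable_smul_dirac_restrict (fun x : ↥(Set.Icc (0:ℝ) 1) => (x:ℝ)) (p_c*ε) x3 A
    have I4 := integrable_smul_dirac_restrict (fun x : ↥(Set.Icc (0:ℝ) 1) => (x:ℝ)) (p_c*ε) x4 A
    rw [hμ, Measure.restrict_add, Measure.restrict_add, Measure.restrict_add,
      Measure.restrict_add,
      integral_add_measure (((I0.add_measure I1).add_measure I2).add_measure I3) I4,
      integral_add_measure ((I0.add_measure I1).add_measure I2) I3,
      integral_add_measure (I0.add_measure I1) I2,
      integral_add_measure I0 I1,
      setIntegral_smul_dirac _ _ hw0,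
      setIntegral_smul_dirac _ _ hp0.le,
      setIntegral_smul_dirac _ _ hp0.le,
      setIntegral_smul_dirac _ _ hp0.le,
      setIntegral_smul_dirac _ _ hp0.le,
      hDdef, Measure.add_apply, Measure.add_apply, Measure.add_apply, Measure.add_apply,
      atomM_apply_true, atomM_apply_true, atomM_apply_true, atomM_apply_true, atomM_apply_true]
    have hfin : ∀ (w : ℝ) (b : Prop) (inst : Decidable b),
        (if b then ENNReal.ofReal w else 0) ≠ ⊤ := by
      intro w b inst; split <;> simp
    rw [ENNReal.toReal_add (by
        exact ENNReal.add_ne_top.2 ⟨ENNReal.add_ne_top.2 ⟨ENNReal.add_ne_top.2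
          ⟨hfin _ _ _, hfin _ _ _⟩, hfin _ _ _⟩, hfin _ _ _⟩) (hfin _ _ _),
      ENNReal.toReal_add (by
        exact ENNReal.add_ne_top.2 ⟨ENNReal.add_ne_top.2 ⟨hfin _ _ _, hfin _ _ _⟩, hfin _ _ _⟩)
        (hfin _ _ _),
      ENNReal.toReal_add (ENNReal.add_ne_top.2 ⟨hfin _ _ _, hfin _ _ _⟩) (hfin _ _ _),
      ENNReal.toReal_add (hfin _ _ _) (hfin _ _ _)]
    simp only [apply_ite ENNReal.toReal, ENNReal.toReal_zero, hv0, hv1, hv2, hv3, hv4,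
      ENNReal.toReal_ofReal (mul_nonneg hw0 le_rfl),
      ENNReal.toReal_ofReal (mul_nonneg hp0.le (by linarith : (0:ℝ) ≤ 1/4 - ε/2)),
      ENNReal.toReal_ofReal (mul_nonneg hp0.le (by linarith : (0:ℝ) ≤ 1/4 + ε/2)),
      ENNReal.toReal_ofReal (mul_nonneg hp0.le (by linarith : (0:ℝ) ≤ 1/4 + 3*ε/2)),
      ENNReal.toReal_ofReal (mul_nonneg hp0.le (by linarith : (0:ℝ) ≤ 1/4 + 5*ε/2))]
  · -- main part
    intro alg halgmeas halg01
    haveI hμP : IsProbabilityMeasure (D.map Prod.fst) :=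
      Measure.isProbabilityMeasure_map measurable_fst.aemeasurable
    have hwin : ∀ (S : Set (↥(Set.Icc (0:ℝ) 1))),
        (x1 ∈ S ∨ x2 ∈ S ∨ x3 ∈ S ∨ x4 ∈ S) →
        ENNReal.ofReal (p_c*ε) ≤ D.map Prod.fst S := by
      intro S hS
      rw [hμ]
      simp only [Measure.coe_add, Pi.add_apply, Measure.smul_apply, smul_eq_mul]
      rcases hS with h | h | h | h
      · exact le5_2 (by rw [Measure.dirac_apply_of_mem h, mul_one])
      · exact le5_3 (by rw [Measure.dirac_apply_of_mem h, mul_one])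
      · exact le5_4 (by rw [Measure.dirac_apply_of_mem h, mul_one])
      · exact le5_5 (by rw [Measure.dirac_apply_of_mem h, mul_one])
    have hw1a : ENNReal.ofReal (p_c * ε) ≤
        D.map Prod.fst {x : ↥(Set.Icc (0:ℝ) 1) | (x:ℝ) ∈ Set.Ioc (1/4 : ℝ) (1/4 + ε)} :=
      hwin _ (Or.inr (Or.inl (by rw [Set.mem_setOf_eq, hv2]; constructor <;> [linarith; linarith])))
    have hw1b : ENNReal.ofReal (p_c * ε) ≤
        D.map Prod.fst {x : ↥(Set.Icc (0:ℝ) 1) | (x:ℝ) ∈ Set.Ico (1/4 - ε : ℝ) (1/4)} :=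
      hwin _ (Or.inl (by rw [Set.mem_setOf_eq, hv1]; constructor <;> [linarith; linarith]))
    have hw2a : ENNReal.ofReal (p_c * ε) ≤
        D.map Prod.fst {x : ↥(Set.Icc (0:ℝ) 1) |
          (x:ℝ) ∈ Set.Ioc (1/4 + 2*ε : ℝ) (1/4 + 2*ε + ε)} :=
      hwin _ (Or.inr (Or.inr (Or.inr
        (by rw [Set.mem_setOf_eq, hv4]; constructor <;> [linarith; linarith]))))
    have hw2b : ENNReal.ofReal (p_c * ε) ≤
        D.map Prod.fst {x : ↥(Set.Icc (0:ℝ) 1) |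
          (x:ℝ) ∈ Set.Ico (1/4 + 2*ε - ε : ℝ) (1/4 + 2*ε)} :=
      hwin _ (Or.inr (Or.inr (Or.inl
        (by rw [Set.mem_setOf_eq, hv3]; constructor <;> [linarith; linarith]))))
    -- the disagreement window
    set T : Set (↥(Set.Icc (0:ℝ) 1)) := {x | (1/4:ℝ) ≤ (x:ℝ) ∧ (x:ℝ) < 1/4 + 2*ε} with hTdef
    have h0c : x0 ∈ Tᶜ := by
      simp only [hTdef, Set.mem_compl_iff, Set.mem_setOf_eq, hv0, not_and, not_lt]
      intro h; linarith
    have h1c : x1 ∈ Tᶜ := by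
      simp only [hTdef, Set.mem_compl_iff, Set.mem_setOf_eq, hv1, not_and, not_lt]
      intro h; linarith
    have h4c : x4 ∈ Tᶜ := by
      simp only [hTdef, Set.mem_compl_iff, Set.mem_setOf_eq, hv4, not_and, not_lt]
      intro h; linarith
    have h2T : x2 ∈ T := by
      rw [hTdef, Set.mem_setOf_eq, hv2]; constructor <;> linarith
    have h3T : x3 ∈ T := by
      rw [hTdef, Set.mem_setOf_eq, hv3]; constructor <;> linarith
    have hd2 : Measure.dirac x2 Tᶜ = 0 := by
      rw [Measure.dirac_apply]
      exact Set.indicator_of_notMem (Set.notMem_compl_iff.mpr h2T) _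
    have hd3 : Measure.dirac x3 Tᶜ = 0 := by
      rw [Measure.dirac_apply]
      exact Set.indicator_of_notMem (Set.notMem_compl_iff.mpr h3T) _
    have hTc : D.map Prod.fst Tᶜ = ENNReal.ofReal (1 - 2*(p_c*ε)) := by
      rw [hμ]
      simp only [Measure.coe_add, Pi.add_apply, Measure.smul_apply, smul_eq_mul]
      rw [Measure.dirac_apply_of_mem h0c, Measure.dirac_apply_of_mem h1c, hd2, hd3,
        Measure.dirac_apply_of_mem h4c]
      simp only [mul_one, mul_zero, add_zero]
      rw [← ENNReal.ofReal_add (by linarith) hp0.le, ← ENNReal.ofReal_add (by linarith) hp0.le]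
      congr 1
      ring
    have hPE : (Measure.pi fun _ : Fin m => D.map Prod.fst)
        (Set.pi Set.univ fun _ : Fin m => Tᶜ) = ENNReal.ofReal ((1 - 2*(p_c*ε))^m) := by
      rw [Measure.pi_pi]
      simp only [hTc]
      rw [Finset.prod_const, Finset.card_univ, Fintype.card_fin,
        ← ENNReal.ofReal_pow (by linarith)]
    have hsub : (Set.pi Set.univ fun _ : Fin m => Tᶜ) ⊆
        {xs : Fin m → ↥(Set.Icc (0:ℝ) 1) |
          ε ≤ |alg (fun i => (xs i, decide ((1/4:ℝ) ≤ (xs i : ℝ)))) - 1/4|} ∪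
        {xs : Fin m → ↥(Set.Icc (0:ℝ) 1) |
          ε ≤ |alg (fun i => (xs i, decide ((1/4 + 2*ε:ℝ) ≤ (xs i : ℝ)))) - (1/4 + 2*ε)|} := by
      intro xs hxs
      have hlab : (fun i => (xs i, decide ((1/4:ℝ) ≤ (xs i : ℝ))))
          = (fun i => (xs i, decide ((1/4 + 2*ε:ℝ) ≤ (xs i : ℝ)))) := by
        funext i
        have hx : ¬ ((1/4:ℝ) ≤ (xs i : ℝ) ∧ (xs i : ℝ) < 1/4 + 2*ε) := hxs i (Set.mem_univ i)
        have : ((1/4:ℝ) ≤ (xs i : ℝ)) ↔ ((1/4 + 2*ε:ℝ) ≤ (xs i : ℝ)) := by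
          constructor
          · intro h1
            by_contra h2
            push_neg at h2
            exact hx ⟨h1, h2⟩
          · intro h2; linarith
        rw [decide_eq_decide.mpr this]
      by_contra hcon
      rw [Set.mem_union] at hcon
      push_neg at hcon
      obtain ⟨hc1, hc2⟩ := hcon
      rw [Set.mem_setOf_eq, not_le] at hc1 hc2
      rw [hlab] at hc1
      rw [abs_lt] at hc1 hc2
      linarith [hc1.1, hc1.2, hc2.1, hc2.2]
    have hsum2 : (Measure.pi fun _ : Fin m => D.map Prod.fst)
          (Set.pi Set.univ fun _ : Fin m => Tᶜ) ≤
        (Measure.pi fun _ : Fin m => D.map Prod.fst)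
          {xs : Fin m → ↥(Set.Icc (0:ℝ) 1) |
            ε ≤ |alg (fun i => (xs i, decide ((1/4:ℝ) ≤ (xs i : ℝ)))) - 1/4|} +
        (Measure.pi fun _ : Fin m => D.map Prod.fst)
          {xs : Fin m → ↥(Set.Icc (0:ℝ) 1) |
            ε ≤ |alg (fun i => (xs i, decide ((1/4 + 2*ε:ℝ) ≤ (xs i : ℝ)))) - (1/4 + 2*ε)|} :=
      (measure_mono hsub).trans (measure_union_le _ _)
    by_cases hmm : (m:ℝ) < Real.log (1/(2*δ)) / (8 * p_c * ε)
    · have hmm' : (m:ℝ) < Real.log (1/(2*δ)) / (8 * (p_c * ε)) := by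
        rw [← mul_assoc]; exact hmm
      have h2δE : ENNReal.ofReal (2*δ) < (Measure.pi fun _ : Fin m => D.map Prod.fst)
          (Set.pi Set.univ fun _ : Fin m => Tᶜ) := by
        rw [hPE]
        exact (ENNReal.ofReal_lt_ofReal_iff (pow_pos (by linarith) m)).2
          (real_aux (p_c*ε) δ m hp0 hp8 hδ hmm')
      by_cases hb : ENNReal.ofReal δ < (Measure.pi fun _ : Fin m => D.map Prod.fst)
          {xs : Fin m → ↥(Set.Icc (0:ℝ) 1) |
            ε ≤ |alg (fun i => (xs i, decide ((1/4:ℝ) ≤ (xs i : ℝ)))) - 1/4|}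
      · exact ⟨1/4, by norm_num, hw1a, hw1b, fun _ => hb⟩
      · refine ⟨1/4 + 2*ε, ⟨by linarith, by linarith⟩, hw2a, hw2b, fun _ => ?_⟩
        by_contra hb2
        push_neg at hb hb2
        have hle : (Measure.pi fun _ : Fin m => D.map Prod.fst)
            (Set.pi Set.univ fun _ : Fin m => Tᶜ)
            ≤ ENNReal.ofReal δ + ENNReal.ofReal δ := hsum2.trans (add_le_add hb hb2)
        rw [← ENNReal.ofReal_add hδ.le hδ.le] at hle
        have hfin : ENNReal.ofReal (2*δ) < ENNReal.ofReal (δ+δ) := lt_of_lt_of_le h2δE hle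
        rw [two_mul] at hfin
        exact lt_irrefl _ hfin
    · exact ⟨1/4, by norm_num, hw1a, hw1b, fun h => absurd h hmm⟩
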